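/- Let φ : ℝ → ℝ be continuously differentiable and increasing, and suppose there exist constants c, C, R > 0 such that c|x| ≤ |φ(x)| ≤ C|x| whenever |x| ≥ R. Then for every z ∈ ℂ the function t ↦ log*|1 − z/t| · φ'(t) is Lebesgue integrable on ℝ; in particular the potential ω_{φ'}(z) = ∫_ℝ log*|1 − z/t| φ'(t) dt is a well-defined (absolutely convergent) integral for every z ∈ ℂ. -/

import Mathlib

open MeasureTheory Complex Set Filter Topology

/-- The modified logarithm `log*|1 - z/t|`. -/
noncomputable def logStar (z : ℂ) (t : ℝ) : ℝ :=
  if 1 < |t| then Real.log (‖(1 - z / (t : ℂ))‖) + z.re / t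
  else Real.log (‖(1 - z / (t : ℂ))‖)

/- log is integrable near 0 -/
lemma aux_integrableOn_log01 : IntegrableOn Real.log (Set.Ioc (0:ℝ) 1) := by
  have hcont : ContinuousOn (fun x : ℝ => x - x * Real.log x) (Set.Icc 0 1) :=
    (continuous_id.sub Real.continuous_mul_log).continuousOn
  have hderiv : ∀ x ∈ Set.Ioo (0:ℝ) 1,
      HasDerivAt (fun x : ℝ => x - x * Real.log x) (-Real.log x) x := by
    intro x hx
    have h1 : HasDerivAt (fun x : ℝ => x * Real.log x) (1 * Real.log x + x * x⁻¹) x :=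
      (hasDerivAt_id x).mul (Real.hasDerivAt_log (ne_of_gt hx.1))
    have h2 := (hasDerivAt_id x).sub h1
    refine h2.congr_deriv ?_
    have : x ≠ 0 := ne_of_gt hx.1
    rw [mul_inv_cancel₀ this]; ring
  have hpos : ∀ x ∈ Set.Ioo (0:ℝ) 1, 0 ≤ -Real.log x := fun x hx =>
    neg_nonneg.2 (Real.log_nonpos hx.1.le hx.2.le)
  have h := intervalIntegral.integrableOn_deriv_of_nonneg hcont hderiv hpos
  exact h.neg.congr (ae_of_all _ fun x => by simp)

lemma aux_logAbs_intervalIntegrable (a b : ℝ) :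
    IntervalIntegrable (fun t : ℝ => Real.log |t|) volume a b := by
  have h : ∀ c : ℝ, 0 ≤ c → IntervalIntegrable (fun t : ℝ => Real.log |t|) volume 0 c := by
    intro c hc
    rw [intervalIntegrable_iff_integrableOn_Ioc_of_le hc]
    have h1 : IntegrableOn Real.log (Set.Ioc 0 c) := by
      rcases le_or_gt c 1 with h1 | h1
      · exact aux_integrableOn_log01.mono_set (Set.Ioc_subset_Ioc_right h1)
      · rw [← Set.Ioc_union_Ioc_eq_Ioc zero_le_one h1.le]
        refine aux_integrableOn_log01.union ?_
        refine ((Real.continuousOn_log.mono ?_).integrableOn_compact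
          isCompact_Icc).mono_set Set.Ioc_subset_Icc_self
        intro x hx
        simp only [Set.mem_compl_iff, Set.mem_singleton_iff]
        intro h0
        rw [h0] at hx
        exact absurd hx.1 (by norm_num)
    exact h1.congr_fun (fun x hx => by rw [abs_of_pos hx.1]) measurableSet_Ioc
  have h' : ∀ c : ℝ, IntervalIntegrable (fun t : ℝ => Real.log |t|) volume 0 c := by
    intro c
    rcases le_or_gt 0 c with hc | hc
    · exact h c hc
    · have h0 := h (-c) (by linarith)
      rw [IntervalIntegrable.iff_comp_neg] at h0
      simpa using h0
  exact (h' a).symm.trans (h' b)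

/- tail integrability of g/t^2 -/
lemma aux_tail {ψ g : ℝ → ℝ} (hd : ∀ t, HasDerivAt ψ (g t) t)
    {C T : ℝ} (hC : 0 < C) (hT : 0 < T)
    (hgpos : ∀ t, T ≤ t → 0 ≤ g t)
    (hb : ∀ t, T ≤ t → |ψ t| ≤ C * t) :
    IntegrableOn (fun t => g t / t ^ 2) (Set.Ioi T) := by
  have hψc : Continuous ψ := by
    rw [continuous_iff_continuousAt]; exact fun t => (hd t).continuousAt
  set G : ℝ → ℝ := fun t => ψ t * (t ^ 2)⁻¹ - 2 * C * t⁻¹ with hGdef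
  set G' : ℝ → ℝ := fun t => g t / t ^ 2 - 2 * ψ t / t ^ 3 + 2 * C / t ^ 2 with hG'def
  have hGd : ∀ t ∈ Set.Ici T, HasDerivAt G (G' t) t := by
    intro t ht
    have ht0 : (0:ℝ) < t := lt_of_lt_of_le hT ht
    have ht0' : t ≠ 0 := ne_of_gt ht0
    have hinv2 : HasDerivAt (fun x : ℝ => (x ^ 2)⁻¹) (-(↑2 * t ^ 1) / (t ^ 2) ^ 2) t :=
      (hasDerivAt_pow 2 t).inv (pow_ne_zero 2 ht0')
    have hinv1 : HasDerivAt (fun x : ℝ => x⁻¹) (-(t ^ 2)⁻¹) t := hasDerivAt_inv ht0'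
    have h := ((hd t).mul hinv2).sub (hinv1.const_mul (2 * C))
    refine h.congr_deriv ?_
    simp only [hG'def]
    field_simp
    ring
  have hGpos : ∀ t ∈ Set.Ioi T, 0 ≤ G' t := by
    intro t ht
    have ht0 : (0:ℝ) < t := lt_of_le_of_lt hT.le ht
    have h1 : ψ t ≤ C * t := le_trans (le_abs_self _) (hb t (le_of_lt ht))
    have e : G' t = g t / t ^ 2 + 2 * (C * t - ψ t) / t ^ 3 := by
      simp only [hG'def]; field_simp; ring
    rw [e]
    have h2 := hgpos t (le_of_lt ht)
    have h3 : (0:ℝ) ≤ C * t - ψ t := by linarith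
    have h4 : (0:ℝ) < t ^ 2 := by positivity
    have h5 : (0:ℝ) < t ^ 3 := by positivity
    have := div_nonneg h2 h4.le
    have := div_nonneg (by linarith : (0:ℝ) ≤ 2 * (C * t - ψ t)) h5.le
    linarith
  have hGtend : Tendsto G atTop (𝓝 0) := by
    have h1 : Tendsto (fun t : ℝ => ψ t * (t ^ 2)⁻¹) atTop (𝓝 0) := by
      apply squeeze_zero_norm' (a := fun t : ℝ => C * t⁻¹)
      · filter_upwards [eventually_ge_atTop T, eventually_gt_atTop 0] with t htT ht0
        have hbt : |ψ t| ≤ C * t := hb t htT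
        have ht0' : t ≠ 0 := ne_of_gt ht0
        calc ‖ψ t * (t ^ 2)⁻¹‖ = |ψ t| * (t ^ 2)⁻¹ := by
              rw [norm_mul, Real.norm_eq_abs, Real.norm_eq_abs,
                abs_of_pos (inv_pos.2 (pow_pos ht0 2))]
          _ ≤ (C * t) * (t ^ 2)⁻¹ :=
              mul_le_mul_of_nonneg_right hbt (inv_nonneg.2 (pow_pos ht0 2).le)
          _ = C * t⁻¹ := by field_simp
      · simpa using tendsto_inv_atTop_zero.const_mul C
    have h2 : Tendsto (fun t : ℝ => 2 * C * t⁻¹) atTop (𝓝 0) := by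
      simpa using tendsto_inv_atTop_zero.const_mul (2 * C)
    simpa using h1.sub h2
  have hmain : IntegrableOn G' (Set.Ioi T) :=
    integrableOn_Ioi_deriv_of_nonneg ((hGd T Set.self_mem_Ici).continuousAt.continuousWithinAt)
      (fun x hx => hGd x (le_of_lt (Set.mem_Ioi.1 hx))) hGpos hGtend
  have hinv : IntegrableOn (fun t : ℝ => (t ^ 2)⁻¹) (Set.Ioi T) := by
    have h := integrableOn_Ioi_rpow_of_lt (a := (-2:ℝ)) (by norm_num) hT
    refine h.congr_fun (fun x hx => ?_) measurableSet_Ioi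
    have hx0 : (0:ℝ) < x := lt_trans hT hx
    rw [show (fun t : ℝ => t ^ (-2:ℝ)) x = x ^ (-2:ℝ) from rfl, Real.rpow_neg hx0.le, show ((2:ℝ)) = ((2:ℕ):ℝ) by norm_num, Real.rpow_natCast]
  have h2 : IntegrableOn (fun t : ℝ => 2 * ψ t / t ^ 3) (Set.Ioi T) := by
    refine Integrable.mono' (g := fun t : ℝ => (2 * C) * (t ^ 2)⁻¹) (hinv.const_mul (2 * C)) ?_ ?_
    · refine (ContinuousOn.aestronglyMeasurable ?_ measurableSet_Ioi)
      exact ((continuous_const.mul hψc).continuousOn.div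
        (continuous_pow 3).continuousOn
        (fun x hx => pow_ne_zero 3 (ne_of_gt (lt_trans hT hx))))
    · rw [ae_restrict_iff' measurableSet_Ioi]
      refine ae_of_all _ (fun t ht => ?_)
      have ht0 : (0:ℝ) < t := lt_trans hT ht
      have hbt : |ψ t| ≤ C * t := hb t (le_of_lt ht)
      rw [Real.norm_eq_abs, abs_div, abs_mul, abs_of_pos (pow_pos ht0 3),
        abs_of_pos (by norm_num : (0:ℝ) < 2)]
      rw [div_le_iff₀ (pow_pos ht0 3)]
      calc 2 * |ψ t| ≤ 2 * (C * t) := by linarith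
        _ = 2 * C * (t ^ 2)⁻¹ * t ^ 3 := by field_simp
  have h3 : IntegrableOn (fun t : ℝ => 2 * C / t ^ 2) (Set.Ioi T) := by
    refine IntegrableOn.congr_fun (hinv.const_mul (2 * C)) (fun x hx => ?_) measurableSet_Ioi
    rw [div_eq_mul_inv]
  have hsum := (hmain.add h2).sub h3
  refine IntegrableOn.congr_fun hsum (fun x hx => ?_) measurableSet_Ioi
  simp only [hG'def, Pi.add_apply, Pi.sub_apply]
  ring

/- reflection -/
lemma aux_reflect {f : ℝ → ℝ} {a : ℝ} (h : IntegrableOn (fun t => f (-t)) (Set.Ici a)) :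
    IntegrableOn f (Set.Iic (-a)) := by
  have m : MeasurableEmbedding fun x : ℝ => -x := (Homeomorph.neg ℝ).measurableEmbedding
  rw [IntegrableOn, ← Measure.map_neg_eq_self (volume : Measure ℝ)]
  rw [m.restrict_map, m.integrable_map_iff]
  have : (fun x : ℝ => -x) ⁻¹' Set.Iic (-a) = Set.Ici a := by
    ext x; simp
  rw [this]
  exact h

/- bound on logStar for large |t| -/
lemma aux_logStar_large {z : ℂ} {t : ℝ} (h2 : 2 ≤ |t|) (hz : 2 * ‖z‖ + 2 ≤ |t|) :
    |logStar z t| ≤ ‖z‖ ^ 2 / t ^ 2 := by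
  have ht1 : 1 < |t| := lt_of_lt_of_le one_lt_two h2
  have ht0 : t ≠ 0 := by
    intro h; rw [h, abs_zero] at ht1; linarith
  set w : ℂ := -(z / (t : ℂ)) with hw
  have habs : ‖w‖ = ‖z‖ / |t| := by
    rw [hw, norm_neg, norm_div, Complex.norm_real, Real.norm_eq_abs]
  have hwnorm : ‖w‖ ≤ 1 / 2 := by
    rw [habs, div_le_div_iff₀ (lt_trans one_pos ht1) (by norm_num : (0:ℝ) < 2)]
    nlinarith [norm_nonneg z]
  have hw1 : ‖w‖ < 1 := lt_of_le_of_lt hwnorm (by norm_num)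
  have h1 : (1 : ℂ) - z / t = 1 + w := by rw [hw]; ring
  have hre : logStar z t = (Complex.log (1 + w) - w).re := by
    rw [logStar, if_pos ht1, Complex.sub_re, Complex.log_re, ← h1]
    have hwre : w.re = -(z.re / t) := by
      rw [hw, Complex.neg_re, Complex.div_ofReal_re]
    rw [hwre]; ring
  calc |logStar z t| = |(Complex.log (1 + w) - w).re| := by rw [hre]
    _ ≤ ‖Complex.log (1 + w) - w‖ := Complex.abs_re_le_norm _
    _ = ‖Complex.log (1 + w) - w‖ := rfl
    _ ≤ ‖w‖ ^ 2 * (1 - ‖w‖)⁻¹ / 2 := Complex.norm_log_one_add_sub_self_le hw1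
    _ ≤ ‖w‖ ^ 2 := by
        have hpos : (0:ℝ) < 1 - ‖w‖ := by linarith
        have : (1 - ‖w‖)⁻¹ ≤ 2 := by
          rw [inv_le_comm₀ hpos (by norm_num)]
          linarith
        nlinarith [sq_nonneg ‖w‖]
    _ = ‖z‖ ^ 2 / t ^ 2 := by
        rw [habs, div_pow, _root_.sq_abs]

/- bound on logStar on compact -/
lemma aux_logStar_middle {z : ℂ} {T t : ℝ} (hT : 1 ≤ T) (ht : |t| ≤ T) :
    |logStar z t| ≤ |Real.log (|t - z.re|)| + |Real.log (|t|)| +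
      (Real.log (T + ‖z‖ + 1) + |z.re| + |Real.log (|z.im|)|) := by
  set M : ℝ := T + ‖z‖ + 1 with hM
  have hM1 : 1 ≤ M := by
    have := norm_nonneg z
    simp only [hM]; linarith
  have hlogM : 0 ≤ Real.log M := Real.log_nonneg hM1
  rcases eq_or_ne t 0 with rfl | ht0
  · have h0 : logStar z 0 = 0 := by simp [logStar]
    rw [h0, abs_zero]
    positivity
  set A : ℝ := ‖(t:ℂ) - z‖ with hA
  set a : ℝ := |t - z.re| with ha
  set b : ℝ := |t| with hb
  set m : ℝ := |z.im| with hm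
  have habs : ‖1 - z / (t:ℂ)‖ = A / b := by
    have htC : (t:ℂ) ≠ 0 := Complex.ofReal_ne_zero.2 ht0
    have h1 : (1 : ℂ) - z / t = ((t:ℂ) - z) / t := by
      rw [sub_div, div_self htC]
    rw [h1, norm_div, Complex.norm_real, Real.norm_eq_abs]
  have key : |Real.log (‖1 - z / (t:ℂ)‖)| ≤
      |Real.log a| + |Real.log b| + Real.log M + |Real.log m| := by
    rcases eq_or_ne A 0 with h0 | h0
    · rw [habs, h0, zero_div, Real.log_zero, abs_zero]
      positivity
    · have hb0 : b ≠ 0 := abs_ne_zero.2 ht0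
      have hlogdiv : Real.log (‖1 - z / (t:ℂ)‖) =
          Real.log A - Real.log b := by
        rw [habs, Real.log_div h0 hb0]
      rw [hlogdiv]
      have main : |Real.log A| ≤ |Real.log a| + Real.log M + |Real.log m| := by
        have hub : A ≤ M := by
          calc A = ‖(t:ℂ) - z‖ := rfl
            _ ≤ ‖(t:ℂ)‖ + ‖z‖ := norm_sub_le _ _
            _ = |t| + ‖z‖ := by rw [Complex.norm_real, Real.norm_eq_abs]
            _ ≤ M := by simp only [hM]; linarith
        rcases le_or_gt 1 A with hge | hlt
        · rw [_root_.abs_of_nonneg (Real.log_nonneg hge)]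
          have h1 := Real.log_le_log (by linarith) hub
          have h2 := abs_nonneg (Real.log a)
          have h3 := abs_nonneg (Real.log m)
          linarith
        · have hApos : 0 < A := lt_of_le_of_ne (norm_nonneg _) (Ne.symm h0)
          have hlogneg : Real.log A ≤ 0 := Real.log_nonpos hApos.le hlt.le
          rw [abs_of_nonpos hlogneg]
          rcases eq_or_ne (t - z.re) 0 with hre0 | hre0
          · have hre : ((t:ℂ) - z).re = 0 := by
              have he : ((t:ℂ) - z).re = t - z.re := by simp [Complex.sub_re]
              rw [he, hre0]
            have him : A = m := by
              apply le_antisymm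
              · have hle1 := Complex.norm_le_abs_re_add_abs_im ((t:ℂ) - z)
                rw [hre] at hle1
                simpa [Complex.sub_im, hm] using hle1
              · have hle2 := Complex.abs_im_le_norm ((t:ℂ) - z)
                simpa [Complex.sub_im, hm, hA] using hle2
            rw [him]
            have h1 := neg_le_abs (Real.log m)
            have h2 := abs_nonneg (Real.log a)
            linarith
          · have hlb : a ≤ A := by
              have h := Complex.abs_re_le_norm ((t:ℂ) - z)
              have he : ((t:ℂ) - z).re = t - z.re := by simp [Complex.sub_re]
              rw [he] at h
              exact h
            have hlbpos : 0 < a := abs_pos.2 hre0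
            have hmono : Real.log a ≤ Real.log A := Real.log_le_log hlbpos hlb
            have h1 := neg_le_abs (Real.log a)
            have h2 := abs_nonneg (Real.log m)
            linarith
      have htri : |Real.log A - Real.log b| ≤ |Real.log A| + |Real.log b| := by
        calc |Real.log A - Real.log b| = |Real.log A + -Real.log b| := by rw [sub_eq_add_neg]
          _ ≤ |Real.log A| + |(-Real.log b)| := abs_add_le _ _
          _ = |Real.log A| + |Real.log b| := by rw [abs_neg]
      have h2 := abs_nonneg (Real.log b)
      linarith
  rw [logStar]
  split_ifs with hbr
  · have hE : |z.re / t| ≤ |z.re| := by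
      rw [abs_div]
      rcases eq_or_ne z.re 0 with h | h
      · simp [h]
      · calc |z.re| / |t| ≤ |z.re| / 1 :=
            div_le_div_of_nonneg_left (abs_nonneg _) one_pos hbr.le
          _ = |z.re| := div_one _
    calc |Real.log (‖1 - z / (t:ℂ)‖) + z.re / t|
        ≤ |Real.log (‖1 - z / (t:ℂ)‖)| + |z.re / t| := abs_add_le _ _
      _ ≤ _ := by linarith [key, hE]
  · have := abs_nonneg z.re
    linarith [key]

theorem stmt_0 (φ : ℝ → ℝ) (hφ : ContDiff ℝ 1 φ) (hmono : StrictMono φ)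
    (c C R : ℝ) (hc : 0 < c) (hC : 0 < C) (hR : 0 < R)
    (hbound : ∀ x : ℝ, R ≤ |x| → c * |x| ≤ |φ x| ∧ |φ x| ≤ C * |x|) :
    ∀ z : ℂ, Integrable (fun t : ℝ => logStar z t * deriv φ t) := by
  intro z
  have hdiff : Differentiable ℝ φ := hφ.differentiable one_ne_zero
  have hderiv : ∀ t, HasDerivAt φ (deriv φ t) t := fun t => (hdiff t).hasDerivAt
  have hcd : Continuous (deriv φ) := hφ.continuous_deriv le_rfl
  have hpos : ∀ t, 0 ≤ deriv φ t := by
    intro t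
    have hslope := hasDerivAt_iff_tendsto_slope.mp (hderiv t)
    have hmon : Tendsto (slope φ t) (𝓝[>] t) (𝓝 (deriv φ t)) :=
      hslope.mono_left (nhdsWithin_mono t (fun x hx => (ne_of_lt hx).symm))
    refine ge_of_tendsto hmon ?_
    filter_upwards [self_mem_nhdsWithin] with x hx
    have hlt : t < x := hx
    rw [slope_def_field]
    apply div_nonneg
    · linarith [(hmono hlt).le]
    · linarith
  set T : ℝ := max (max R 2) (2 * ‖z‖ + 2) with hT
  have hTR : R ≤ T := le_trans (le_max_left _ _) (le_max_left _ _)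
  have hT2 : 2 ≤ T := le_trans (le_max_right _ _) (le_max_left _ _)
  have hTz : 2 * ‖z‖ + 2 ≤ T := le_max_right _ _
  have hT0 : (0:ℝ) < T := by linarith
  have hT1 : (1:ℝ) ≤ T := by linarith
  -- measurability
  have hmeas : Measurable (logStar z) := by
    have hker : Measurable fun t : ℝ => Real.log (‖1 - z / (t:ℂ)‖) := by
      apply Real.measurable_log.comp
      apply continuous_norm.measurable.comp
      have heq : (fun t : ℝ => (1:ℂ) - z / (t:ℂ)) = fun t : ℝ => 1 - z * ((t⁻¹ : ℝ) : ℂ) := by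
        funext t; rw [Complex.ofReal_inv, div_eq_mul_inv]
      rw [heq]
      exact measurable_const.sub ((Complex.measurable_ofReal.comp measurable_inv).const_mul z)
    have h2 : Measurable fun t : ℝ => z.re / t := measurable_const.div measurable_id
    have hset : MeasurableSet {t : ℝ | 1 < |t|} :=
      measurableSet_lt measurable_const measurable_abs
    exact Measurable.ite hset (hker.add h2) hker
  have hfm : AEStronglyMeasurable (fun t => logStar z t * deriv φ t) volume :=
    (hmeas.mul hcd.measurable).aestronglyMeasurable
  -- right tail
  have htail : IntegrableOn (fun t => deriv φ t / t ^ 2) (Set.Ioi T) := by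
    refine aux_tail hderiv hC hT0 (fun t _ => hpos t) (fun t ht => ?_)
    have ht0 : (0:ℝ) < t := lt_of_lt_of_le hT0 ht
    have habs : |t| = t := abs_of_pos ht0
    have := (hbound t (by rw [habs]; linarith)).2
    rwa [habs] at this
  have hIoi : IntegrableOn (fun t => logStar z t * deriv φ t) (Set.Ioi T) := by
    refine Integrable.mono' (htail.const_mul (‖z‖ ^ 2)) hfm.restrict ?_
    rw [ae_restrict_iff' measurableSet_Ioi]
    refine ae_of_all _ fun t ht => ?_
    have ht0 : (0:ℝ) < t := lt_of_lt_of_le hT0 (le_of_lt ht)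
    have habs : |t| = t := abs_of_pos ht0
    have hb1 := aux_logStar_large (z := z) (t := t) (by rw [habs]; linarith [le_of_lt (Set.mem_Ioi.1 ht)])
      (by rw [habs]; linarith [le_of_lt (Set.mem_Ioi.1 ht)])
    rw [Real.norm_eq_abs, abs_mul]
    calc |logStar z t| * |deriv φ t| ≤ (‖z‖ ^ 2 / t ^ 2) * deriv φ t := by
          apply mul_le_mul hb1 (le_of_eq (_root_.abs_of_nonneg (hpos t))) (abs_nonneg _)
          positivity
      _ = ‖z‖ ^ 2 * (deriv φ t / t ^ 2) := by ring
  -- left tail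
  have hneg : ∀ t : ℝ, HasDerivAt (fun s => -φ (-s)) (deriv φ (-t)) t := by
    intro t
    have h1 := ((hderiv (-t)).comp t (hasDerivAt_neg t)).neg
    exact h1.congr_deriv (by ring)
  have htailL : IntegrableOn (fun t => deriv φ (-t) / t ^ 2) (Set.Ioi T) := by
    refine aux_tail hneg hC hT0 (fun t _ => hpos (-t)) (fun t ht => ?_)
    have ht0 : (0:ℝ) < t := lt_of_lt_of_le hT0 ht
    have habs : |(-t)| = t := by rw [abs_neg, abs_of_pos ht0]
    have h := (hbound (-t) (by rw [habs]; linarith)).2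
    rw [habs] at h
    simpa [abs_neg] using h
  have htailL' : IntegrableOn (fun t => deriv φ t / t ^ 2) (Set.Iic (-T)) := by
    apply aux_reflect
    rw [integrableOn_Ici_iff_integrableOn_Ioi]
    refine IntegrableOn.congr_fun htailL (fun x hx => ?_) measurableSet_Ioi
    rw [neg_sq]
  have hIic : IntegrableOn (fun t => logStar z t * deriv φ t) (Set.Iic (-T)) := by
    refine Integrable.mono' (htailL'.const_mul (‖z‖ ^ 2)) hfm.restrict ?_
    rw [ae_restrict_iff' measurableSet_Iic]
    refine ae_of_all _ fun t ht => ?_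
    have ht0 : t < 0 := lt_of_le_of_lt ht (by linarith)
    have habs : |t| = -t := abs_of_neg ht0
    have htT : T ≤ -t := by have h := Set.mem_Iic.mp ht; linarith
    have hb1 := aux_logStar_large (z := z) (t := t) (by rw [habs]; linarith)
      (by rw [habs]; linarith)
    rw [Real.norm_eq_abs, abs_mul]
    calc |logStar z t| * |deriv φ t| ≤ (‖z‖ ^ 2 / t ^ 2) * deriv φ t := by
          apply mul_le_mul hb1 (le_of_eq (_root_.abs_of_nonneg (hpos t))) (abs_nonneg _)
          positivity
      _ = ‖z‖ ^ 2 * (deriv φ t / t ^ 2) := by ring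
  -- middle
  have hmid : IntegrableOn (fun t => logStar z t * deriv φ t) (Set.Ioc (-T) T) := by
    obtain ⟨B, hB⟩ :=
      (isCompact_Icc (a := -T) (b := T)).exists_bound_of_continuousOn hcd.continuousOn
    have hB0 : 0 ≤ B :=
      le_trans (norm_nonneg (deriv φ 0)) (hB 0 (by constructor <;> linarith))
    set K : ℝ := Real.log (T + ‖z‖ + 1) + |z.re| + |Real.log (|z.im|)| with hK
    have hK0 : 0 ≤ K := by
      have h1 : 0 ≤ Real.log (T + ‖z‖ + 1) :=
        Real.log_nonneg (by linarith [norm_nonneg z])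
      have h2 := abs_nonneg z.re
      have h3 := abs_nonneg (Real.log (|z.im|))
      simp only [hK]; linarith
    have i1 : IntervalIntegrable (fun t : ℝ => Real.log (|t - z.re|)) volume (-T) T := by
      have h := (aux_logAbs_intervalIntegrable (-T - z.re) (T - z.re)).comp_sub_right z.re
      simpa using h
    have i2 := aux_logAbs_intervalIntegrable (-T) T
    have iG : IntervalIntegrable
        (fun t : ℝ => (|Real.log (|t - z.re|)| + |Real.log (|t|)| + K) * B) volume (-T) T := by
      have := ((i1.norm.add i2.norm).add (intervalIntegrable_const (c := K))).mul_const B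
      simpa [Real.norm_eq_abs] using this
    rw [intervalIntegrable_iff_integrableOn_Ioc_of_le (by linarith : -T ≤ T)] at iG
    refine Integrable.mono' iG hfm.restrict ?_
    rw [ae_restrict_iff' measurableSet_Ioc]
    refine ae_of_all _ fun t ht => ?_
    have habs_t : |t| ≤ T := abs_le.2 ⟨ht.1.le, ht.2⟩
    have h1 := aux_logStar_middle (z := z) hT1 habs_t
    have h2 : |deriv φ t| ≤ B := by
      have := hB t ⟨(abs_le.1 habs_t).1, (abs_le.1 habs_t).2⟩
      rwa [Real.norm_eq_abs] at this
    rw [Real.norm_eq_abs, abs_mul]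
    apply mul_le_mul h1 h2 (abs_nonneg _)
    have := abs_nonneg (Real.log (|t - z.re|))
    have := abs_nonneg (Real.log (|t|))
    linarith
  rw [← integrableOn_univ]
  have huniv : (Set.univ : Set ℝ) = Set.Iic (-T) ∪ (Set.Ioc (-T) T ∪ Set.Ioi T) := by
    rw [Set.Ioc_union_Ioi_eq_Ioi (by linarith : -T ≤ T), Set.Iic_union_Ioi]
  rw [huniv]
  exact hIic.union (hmid.union hIoi)
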